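/- Let X be the 8-dimensional nilmanifold Lie algebra with (1,0)-form basis satisfying dφ¹ = dφ² = 0, dφ³ = φ¹∧φ², dφ⁴ = φ¹∧φ³. Then ω_C = A φ¹∧φ² + B φ¹∧φ³ + C φ¹∧φ⁴ + D φ²∧φ³ with A,B,C,D ∈ ℂ and C·D ≠ 0 is a closed (2,0)-form with ω_C ∧ ω_C ≠ 0, and conversely every closed invariant (2,0)-form lies in the span of φ¹∧φ², φ¹∧φ³, φ¹∧φ⁴, φ²∧φ³. -/

import Mathlib

/-
STATEMENT 17: For the 8-dimensional nilmanifold Lie algebra with (1,0)-forms satisfying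
dφ¹ = dφ² = 0, dφ³ = φ¹∧φ², dφ⁴ = φ¹∧φ³:
(a) ω_C = A φ¹² + B φ¹³ + C φ¹⁴ + D φ²³ with C·D ≠ 0 is a closed (2,0)-form with
    ω_C ∧ ω_C ≠ 0;
(b) every closed invariant (2,0)-form lies in span{φ¹², φ¹³, φ¹⁴, φ²³}.

Model: exterior algebra over ℂ on generators gen 0..3 = φ¹..φ⁴, gen 4..7 = φ̄¹..φ̄⁴;
d determined by the structure equations (and conjugates) and the Leibniz rule.
-/

noncomputable section

abbrev E := ExteriorAlgebra ℂ (Fin 8 → ℂ)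

def gen (i : Fin 8) : E := ExteriorAlgebra.ι ℂ (Pi.single i 1)

def dgen : Fin 8 → E :=
  ![0, 0, gen 0 * gen 1, gen 0 * gen 2, 0, 0, gen 4 * gen 5, gen 4 * gen 6]

def d2 (i j : Fin 8) : E := dgen i * gen j - gen i * dgen j

/-- generic invariant (2,0)-form Ω = α φ¹² + β φ¹³ + γ φ¹⁴ + τ φ²³ + θ φ²⁴ + ζ φ³⁴. -/
def Om (a b c d e f : ℂ) : E :=
  a • (gen 0 * gen 1) + b • (gen 0 * gen 2) + c • (gen 0 * gen 3) +
  d • (gen 1 * gen 2) + e • (gen 1 * gen 3) + f • (gen 2 * gen 3)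

def dOm (a b c d e f : ℂ) : E :=
  a • d2 0 1 + b • d2 0 2 + c • d2 0 3 + d • d2 1 2 + e • d2 1 3 + f • d2 2 3

-- auxiliary machinery

lemma gsq (i : Fin 8) : gen i * gen i = 0 := ExteriorAlgebra.ι_sq_zero _

lemma gswap (i j : Fin 8) : gen j * gen i = -(gen i * gen j) := by
  have h := ExteriorAlgebra.ι_add_mul_swap (R := ℂ) (M := Fin 8 → ℂ) (Pi.single i 1) (Pi.single j 1)
  unfold gen
  exact eq_neg_of_add_eq_zero_left (by rw [add_comm]; exact h)

lemma gswap' (i j : Fin 8) (x : E) : gen j * (gen i * x) = -(gen i * (gen j * x)) := by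
  rw [← mul_assoc, gswap, neg_mul, mul_assoc]

lemma gsq' (i : Fin 8) (x : E) : gen i * (gen i * x) = 0 := by
  rw [← mul_assoc, gsq, zero_mul]

lemma prod4 (a b c d : Fin 8) : gen a * (gen b * (gen c * gen d)) =
    ExteriorAlgebra.ιMulti ℂ 4 (fun j => Pi.single (![a,b,c,d] j) (1:ℂ)) := by
  simp [ExteriorAlgebra.ιMulti_apply, List.ofFn_succ, gen, mul_assoc, Matrix.vecTail, Matrix.vecHead]

lemma prod3 (a b c : Fin 8) : gen a * (gen b * gen c) =
    ExteriorAlgebra.ιMulti ℂ 3 (fun j => Pi.single (![a,b,c] j) (1:ℂ)) := by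
  simp [ExteriorAlgebra.ιMulti_apply, List.ofFn_succ, gen, mul_assoc, Matrix.vecTail, Matrix.vecHead]

def F (n : ℕ) (idx : Fin n → Fin 8) : E →ₗ[ℂ] ℂ :=
  ExteriorAlgebra.liftAlternating (fun i => if h : i = n then h ▸
    (Matrix.detRowAlternating.compLinearMap (LinearMap.funLeft ℂ ℂ idx)) else 0)

lemma F_apply (n : ℕ) (idx : Fin n → Fin 8) (v : Fin n → Fin 8) :
    F n idx (ExteriorAlgebra.ιMulti ℂ n (fun j => Pi.single (v j) (1:ℂ))) =
      Matrix.det (Matrix.of fun i j => (Pi.single (v i) (1:ℂ) : Fin 8 → ℂ) (idx j)) := by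
  rw [F, ExteriorAlgebra.liftAlternating_apply_ιMulti]
  simp [Matrix.detRowAlternating]
  rfl

lemma F4_val : F 4 ![0,1,2,3] (gen 0 * (gen 1 * (gen 2 * gen 3))) = 1 := by
  rw [prod4, F_apply]
  have h : (Matrix.of fun i j => (Pi.single ((![0,1,2,3] : Fin 4 → Fin 8) i) (1:ℂ) : Fin 8 → ℂ)
      ((![0,1,2,3] : Fin 4 → Fin 8) j)) = (1 : Matrix (Fin 4) (Fin 4) ℂ) := by
    ext i j
    fin_cases i <;> fin_cases j <;> simp [Pi.single_apply, Matrix.one_apply]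
  rw [h, Matrix.det_one]

lemma F012_X : F 3 ![0,1,2] (gen 0 * (gen 1 * gen 2)) = 1 := by
  rw [prod3, F_apply]
  simp [Matrix.det_fin_three, Pi.single_apply, Matrix.cons_val]

lemma F012_Y : F 3 ![0,1,2] (gen 0 * (gen 1 * gen 3)) = 0 := by
  rw [prod3, F_apply]
  simp [Matrix.det_fin_three, Pi.single_apply, Matrix.cons_val]

lemma F013_X : F 3 ![0,1,3] (gen 0 * (gen 1 * gen 2)) = 0 := by
  rw [prod3, F_apply]
  simp [Matrix.det_fin_three, Pi.single_apply, Matrix.cons_val]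

lemma F013_Y : F 3 ![0,1,3] (gen 0 * (gen 1 * gen 3)) = 1 := by
  rw [prod3, F_apply]
  simp [Matrix.det_fin_three, Pi.single_apply, Matrix.cons_val]

lemma dgen0 : dgen 0 = 0 := rfl
lemma dgen1 : dgen 1 = 0 := rfl
lemma dgen2 : dgen 2 = gen 0 * gen 1 := rfl
lemma dgen3 : dgen 3 = gen 0 * gen 2 := rfl

lemma dOm_eq (a b c d e f : ℂ) :
    dOm a b c d e f = e • (gen 0 * (gen 1 * gen 2)) + f • (gen 0 * (gen 1 * gen 3)) := by
  simp only [dOm, d2, dgen0, dgen1, dgen2, dgen3, zero_mul, mul_assoc,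
    gswap' 0 1, gswap' 0 2, gsq' 0, gsq' 1, gsq' 2, gsq 0, gsq 1, gsq 2, mul_zero, neg_zero,
    mul_neg, neg_neg, zero_sub, sub_zero, smul_zero, smul_neg, zero_add, add_zero, zero_smul]

lemma Om_sq (A B C D : ℂ) :
    Om A B C D 0 0 * Om A B C D 0 0 = (2 * C * D) • (gen 0 * (gen 1 * (gen 2 * gen 3))) := by
  simp only [Om, zero_smul, add_zero, mul_add, add_mul, smul_mul_assoc, mul_smul_comm,
    mul_assoc, smul_smul,
    gswap 0 1, gswap 0 2, gswap 0 3, gswap 1 2, gswap 1 3, gswap 2 3,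
    gswap' 0 1, gswap' 0 2, gswap' 0 3, gswap' 1 2, gswap' 1 3, gswap' 2 3,
    gsq 0, gsq 1, gsq 2, gsq 3, gsq' 0, gsq' 1, gsq' 2, gsq' 3,
    mul_zero, zero_mul, mul_neg, neg_mul, neg_neg, smul_neg, smul_zero, add_zero, zero_add,
    neg_zero]
  module

theorem stmt17 :
    (∀ A B C D : ℂ, C * D ≠ 0 →
        dOm A B C D 0 0 = 0 ∧ Om A B C D 0 0 * Om A B C D 0 0 ≠ 0) ∧
    (∀ α β γ τ θ ζ : ℂ, dOm α β γ τ θ ζ = 0 →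
        Om α β γ τ θ ζ ∈ Submodule.span ℂ
          ({gen 0 * gen 1, gen 0 * gen 2, gen 0 * gen 3, gen 1 * gen 2} : Set E)) := by
  constructor
  · intro A B C D hCD
    constructor
    · rw [dOm_eq]; simp
    · intro h
      rw [Om_sq] at h
      have h2 := congrArg (F 4 ![0,1,2,3]) h
      rw [map_smul, F4_val, map_zero, smul_eq_mul, mul_one] at h2
      exact hCD (by linear_combination h2 / 2)
  · intro α β γ τ θ ζ h
    rw [dOm_eq] at h
    have h1 := congrArg (F 3 ![0,1,2]) h
    rw [map_add, map_smul, map_smul, F012_X, F012_Y, map_zero, smul_eq_mul, smul_eq_mul,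
      mul_one, mul_zero, add_zero] at h1
    have h2 := congrArg (F 3 ![0,1,3]) h
    rw [map_add, map_smul, map_smul, F013_X, F013_Y, map_zero, smul_eq_mul, smul_eq_mul,
      mul_one, mul_zero, zero_add] at h2
    rw [Om, h1, h2, zero_smul, zero_smul, add_zero, add_zero]
    refine Submodule.add_mem _ (Submodule.add_mem _ (Submodule.add_mem _ ?_ ?_) ?_) ?_ <;>
      exact Submodule.smul_mem _ _ (Submodule.subset_span (by simp))


end
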